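/- Let p > 1, let L ≥ 2 and P ≥ 2 be integers, and let W : {1,…,P}^L → ℝ be a tensor whose matricization W(l) is nonzero for every cut 1 ≤ l ≤ L−1. Let 𝒯 be a nonempty set of tensors W̄ : {1,…,P}^L → ℝ all of whose matricizations W̄(l) are nonzero. Then inf over W̄ ∈ 𝒯 of (max over 1 ≤ l ≤ L−1 of ‖W(l) − W̄(l)‖_p) ≥ inf over W̄ ∈ 𝒯 of (max over 1 ≤ l ≤ L−1 of | e^{((1−p)/p)·S_p(W(l))}·‖W(l)‖_1 − e^{((1−p)/p)·S_p(W̄(l))}·‖W̄(l)‖_1 |). -/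

import Mathlib

open scoped BigOperators

/-- The singular values of a real matrix `A`: the nonnegative square roots of the
eigenvalues of the positive semidefinite matrix `Aᵀ * A`. -/
noncomputable def singularValues {m n : Type*} [Fintype m] [Fintype n] [DecidableEq n]
    (A : Matrix m n ℝ) : n → ℝ := fun i =>
  Real.sqrt ((show (A.transpose * A).IsHermitian by
    rw [← Matrix.conjTranspose_eq_transpose_of_trivial]
    exact Matrix.isHermitian_conjTranspose_mul_self A).eigenvalues i)

/-- The Schatten `p`-norm `‖A‖_p = (Σ_i σ_i(A)^p)^{1/p}`. -/
noncomputable def schattenNorm (p : ℝ) {m n : Type*} [Fintype m] [Fintype n] [DecidableEq n]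
    (A : Matrix m n ℝ) : ℝ :=
  (∑ i, singularValues A i ^ p) ^ (1 / p)

/-- The trace norm `‖A‖_1 = Σ_i σ_i(A)`. -/
noncomputable def traceNorm {m n : Type*} [Fintype m] [Fintype n] [DecidableEq n]
    (A : Matrix m n ℝ) : ℝ :=
  ∑ i, singularValues A i

/-- The `p`-Rényi entanglement entropy
`S_p(A) = (1/(1-p)) log((Σ_i σ_i(A)^p)/(Σ_i σ_i(A))^p)`. -/
noncomputable def renyiEE (p : ℝ) {m n : Type*} [Fintype m] [Fintype n] [DecidableEq n]
    (A : Matrix m n ℝ) : ℝ :=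
  (1 / (1 - p)) * Real.log ((∑ i, singularValues A i ^ p) / (∑ i, singularValues A i) ^ p)


section AuxSchatten
open scoped RealInnerProductSpace ENNReal
open Matrix

section SV
variable {m n : Type*} [Fintype m] [Fintype n] [DecidableEq n]

lemma gramHerm (A : Matrix m n ℝ) : (Aᵀ * A).IsHermitian := by
  rw [← Matrix.conjTranspose_eq_transpose_of_trivial]
  exact Matrix.isHermitian_conjTranspose_mul_self A

lemma gramPSD (A : Matrix m n ℝ) : (Aᵀ * A).PosSemidef := by
  rw [← Matrix.conjTranspose_eq_transpose_of_trivial]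
  exact Matrix.posSemidef_conjTranspose_mul_self A

lemma singularValues_eq (A : Matrix m n ℝ) (i : n) :
    singularValues A i = Real.sqrt ((gramHerm A).eigenvalues i) := rfl

lemma singularValues_nonneg (A : Matrix m n ℝ) (i : n) : 0 ≤ singularValues A i :=
  Real.sqrt_nonneg _

lemma sq_singularValues (A : Matrix m n ℝ) (i : n) :
    singularValues A i ^ 2 = (gramHerm A).eigenvalues i := by
  rw [singularValues_eq, sq, Real.mul_self_sqrt ((gramPSD A).eigenvalues_nonneg i)]

/-- If all singular values vanish, the matrix is zero. -/
lemma eq_zero_of_singularValues_eq_zero {A : Matrix m n ℝ} (h : ∀ i, singularValues A i = 0) :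
    A = 0 := by
  have h0 : ∀ i, (gramHerm A).eigenvalues i = 0 := fun i => by
    rw [← sq_singularValues, h i, zero_pow two_ne_zero]
  have : Aᵀ * A = 0 := by
    have := (gramHerm A).spectral_theorem
    rw [this]
    have : Matrix.diagonal (RCLike.ofReal ∘ (gramHerm A).eigenvalues) = (0 : Matrix n n ℝ) := by
      ext i j
      by_cases hij : i = j <;> simp [Matrix.diagonal, hij, h0]
    rw [this, map_zero]
  rwa [← Matrix.conjTranspose_eq_transpose_of_trivial, Matrix.conjTranspose_mul_self_eq_zero]
    at this

lemma exists_singularValue_pos {A : Matrix m n ℝ} (hA : A ≠ 0) :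
    ∃ i, 0 < singularValues A i := by
  by_contra h
  push_neg at h
  exact hA (eq_zero_of_singularValues_eq_zero fun i =>
    le_antisymm (h i) (singularValues_nonneg A i))

end SV

/-- Sub-probability Jensen: `(∑ d z)^p ≤ ∑ d z^p`. -/
lemma subprob_rpow_le {ι : Type*} [Fintype ι] {p : ℝ} (hp : 1 ≤ p)
    (d z : ι → ℝ) (hd : ∀ i, 0 ≤ d i) (hd1 : ∑ i, d i ≤ 1) (hz : ∀ i, 0 ≤ z i) :
    (∑ i, d i * z i) ^ p ≤ ∑ i, d i * z i ^ p := by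
  have hs : 0 ≤ ∑ i, d i := Finset.sum_nonneg fun i _ => hd i
  rcases eq_or_lt_of_le hs with hs0 | hs0
  · have hdz : ∀ i ∈ Finset.univ, d i = 0 := by
      intro i _
      exact le_antisymm (le_trans (Finset.single_le_sum (fun j _ => hd j) (Finset.mem_univ i))
        hs0.symm.le) (hd i)
    have h1 : (∑ i, d i * z i) = 0 := Finset.sum_eq_zero fun i hi => by rw [hdz i hi, zero_mul]
    have h2 : (∑ i, d i * z i ^ p) = 0 := Finset.sum_eq_zero fun i hi => by
      rw [hdz i hi, zero_mul]
    rw [h1, h2, Real.zero_rpow (by linarith : p ≠ 0)]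
  · set s := ∑ i, d i with hsdef
    have key := Real.rpow_arith_mean_le_arith_mean_rpow Finset.univ
      (fun i => d i / s) z (fun i _ => div_nonneg (hd i) hs)
      (by rw [← Finset.sum_div, div_self hs0.ne']) (fun i _ => hz i) hp
    have e1 : (∑ i, d i / s * z i) = (∑ i, d i * z i) / s := by
      rw [Finset.sum_div]; exact Finset.sum_congr rfl fun i _ => by ring
    have e2 : (∑ i, d i / s * z i ^ p) = (∑ i, d i * z i ^ p) / s := by
      rw [Finset.sum_div]; exact Finset.sum_congr rfl fun i _ => by ring
    rw [e1, e2, Real.div_rpow (Finset.sum_nonneg fun i _ => mul_nonneg (hd i) (hz i)) hs,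
      div_le_div_iff₀ (Real.rpow_pos_of_pos hs0 p) hs0] at key
    -- key : (∑ d z)^p * s ≤ (∑ d z^p) * s^p
    have hsp : s ^ p ≤ s := by
      calc s ^ p ≤ s ^ (1:ℝ) := Real.rpow_le_rpow_of_exponent_ge hs0 hd1 hp
      _ = s := Real.rpow_one s
    have hnn : 0 ≤ ∑ i, d i * z i ^ p :=
      Finset.sum_nonneg fun i _ => mul_nonneg (hd i) (Real.rpow_nonneg (hz i) p)
    have := le_trans key (mul_le_mul_of_nonneg_left hsp hnn)
    calc (∑ i, d i * z i) ^ p = (∑ i, d i * z i) ^ p * s / s := by field_simp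
    _ ≤ (∑ i, d i * z i ^ p) * s / s := by gcongr
    _ = ∑ i, d i * z i ^ p := by field_simp

/-- Bessel's inequality for a pairwise-orthogonal family with norms ≤ 1. -/
lemma subBessel {ι E : Type*} [Fintype ι] [NormedAddCommGroup E] [InnerProductSpace ℝ E]
    (w : ι → E) (hw0 : ∀ i j, i ≠ j → ⟪w i, w j⟫ = 0) (hw1 : ∀ i, ‖w i‖ ≤ 1)
    (x : E) : ∑ i, ⟪w i, x⟫ ^ 2 ≤ ‖x‖ ^ 2 := by
  classical
  set S : Finset ι := Finset.univ.filter (fun i => w i ≠ 0) with hS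
  have herm : Orthonormal ℝ (fun i : S => ‖w (i : ι)‖⁻¹ • w (i : ι)) := by
    rw [orthonormal_iff_ite]
    intro i j
    by_cases hij : i = j
    · subst hij
      rw [if_pos rfl]
      have hwi : w (i : ι) ≠ 0 := (Finset.mem_filter.mp i.2).2
      rw [real_inner_smul_left, real_inner_smul_right, real_inner_self_eq_norm_sq]
      have : ‖w (i : ι)‖ ≠ 0 := norm_ne_zero_iff.mpr hwi
      field_simp
    · have : (i : ι) ≠ (j : ι) := fun h => hij (Subtype.ext h)
      rw [if_neg hij, real_inner_smul_left, real_inner_smul_right, hw0 _ _ this,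
        mul_zero, mul_zero]
  have bessel := herm.sum_inner_products_le (𝕜 := ℝ) (s := Finset.univ) x
  have step : ∑ i, ⟪w i, x⟫ ^ 2 = ∑ i ∈ S, ⟪w i, x⟫ ^ 2 := by
    rw [eq_comm]
    apply Finset.sum_subset (Finset.subset_univ S)
    intro i _ hi
    have : w i = 0 := by
      by_contra h
      exact hi (Finset.mem_filter.mpr ⟨Finset.mem_univ i, h⟩)
    rw [this, inner_zero_left, zero_pow two_ne_zero]
  rw [step]
  have e : ∑ i ∈ S, ⟪w i, x⟫ ^ 2
      = ∑ i : S, ⟪w (i : ι), x⟫ ^ 2 := (Finset.sum_coe_sort S _).symm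
  rw [e]
  refine le_trans (Finset.sum_le_sum (fun i _ => ?_ :
    ∀ i : S, i ∈ Finset.univ → ⟪w (i : ι), x⟫ ^ 2 ≤ ‖⟪‖w (i : ι)‖⁻¹ • w (i : ι), x⟫‖ ^ 2)) bessel
  have hwi : w (i : ι) ≠ 0 := (Finset.mem_filter.mp i.2).2
  have hnorm : 0 < ‖w (i : ι)‖ := norm_pos_iff.mpr hwi
  have heq : ⟪w (i : ι), x⟫ = ‖w (i : ι)‖ * ⟪‖w (i : ι)‖⁻¹ • w (i : ι), x⟫ := by
    rw [real_inner_smul_left]; field_simp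
  rw [heq, mul_pow]
  have h1 : ‖w (i : ι)‖ ^ 2 ≤ 1 := by
    have := hw1 (i : ι)
    nlinarith
  calc ‖w (i:ι)‖^2 * ⟪‖w (i:ι)‖⁻¹ • w (i:ι), x⟫ ^ 2
      ≤ 1 * ⟪‖w (i:ι)‖⁻¹ • w (i:ι), x⟫ ^ 2 :=
        mul_le_mul_of_nonneg_right h1 (sq_nonneg _)
    _ = ‖⟪‖w (i:ι)‖⁻¹ • w (i:ι), x⟫‖ ^ 2 := by rw [one_mul, Real.norm_eq_abs, sq_abs]

/-- Parseval for an orthonormal basis, real case. -/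
lemma parseval {ι E : Type*} [Fintype ι] [NormedAddCommGroup E] [InnerProductSpace ℝ E]
    (b : OrthonormalBasis ι ℝ E) (x : E) : ∑ i, ⟪b i, x⟫ ^ 2 = ‖x‖ ^ 2 := by
  have := b.sum_inner_mul_inner x x
  rw [real_inner_self_eq_norm_sq] at this
  rw [← this]
  exact Finset.sum_congr rfl fun i _ => by rw [real_inner_comm x (b i), sq]

section KL
variable {m n : Type*} [Fintype m] [Fintype n] [DecidableEq n]

lemma inner_toE_dot (a : EuclideanSpace ℝ m) (f : m → ℝ) :
    ⟪a, (WithLp.equiv 2 (m → ℝ)).symm f⟫ = ⇑a ⬝ᵥ f := by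
  simp [PiLp.inner_apply, dotProduct, mul_comm]

lemma inner_euclid_dot (a c : EuclideanSpace ℝ m) : ⟪a, c⟫ = ⇑a ⬝ᵥ ⇑c := by
  simp [PiLp.inner_apply, dotProduct, mul_comm]

lemma dot_mulVec_mulVec (A : Matrix m n ℝ) (a c : n → ℝ) :
    (A *ᵥ a) ⬝ᵥ (A *ᵥ c) = a ⬝ᵥ ((Aᵀ * A) *ᵥ c) := by
  rw [← Matrix.mulVec_mulVec, Matrix.dotProduct_mulVec a, Matrix.vecMul_transpose]

lemma gram_dot (A : Matrix m n ℝ) (k l : n) :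
    ⟪(WithLp.equiv 2 (m → ℝ)).symm (A *ᵥ ⇑((gramHerm A).eigenvectorBasis k)),
      (WithLp.equiv 2 (m → ℝ)).symm (A *ᵥ ⇑((gramHerm A).eigenvectorBasis l))⟫
      = if k = l then (gramHerm A).eigenvalues k else 0 := by
  classical
  rw [inner_toE_dot]
  have h1 : ⇑((WithLp.equiv 2 (m → ℝ)).symm (A *ᵥ ⇑((gramHerm A).eigenvectorBasis k)))
      = A *ᵥ ⇑((gramHerm A).eigenvectorBasis k) := rfl
  rw [h1, dot_mulVec_mulVec, (gramHerm A).mulVec_eigenvectorBasis l,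
    dotProduct_smul]
  have h2 : ⇑((gramHerm A).eigenvectorBasis k) ⬝ᵥ ⇑((gramHerm A).eigenvectorBasis l)
      = if k = l then (1:ℝ) else 0 := by
    rw [← inner_euclid_dot]
    exact orthonormal_iff_ite.mp (gramHerm A).eigenvectorBasis.orthonormal k l
  rw [h2]
  by_cases hkl : k = l
  · subst hkl; simp
  · simp [hkl]

end KL

section KLmain
variable {m n : Type*} [Fintype m] [Fintype n] [DecidableEq n]

/-- The key lemma: for an orthonormal basis `b` and a sub-orthonormal family `u`,
the `ℓ^p` sum of `⟪u i, A (b i)⟫` is at most the `p`-th power sum of singular values. -/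
lemma key_lemma {p : ℝ} (hp : 1 ≤ p) (A : Matrix m n ℝ)
    (b : OrthonormalBasis n ℝ (EuclideanSpace ℝ n))
    (u : n → EuclideanSpace ℝ m)
    (hu0 : ∀ i j, i ≠ j → ⟪u i, u j⟫ = 0) (hu1 : ∀ i, ‖u i‖ ≤ 1) :
    ∑ i, |⟪u i, (WithLp.equiv 2 (m → ℝ)).symm (A *ᵥ ⇑(b i))⟫| ^ p
      ≤ ∑ k, singularValues A k ^ p := by
  classical
  set hA := gramHerm A with hAdef
  set x : n → EuclideanSpace ℝ n := fun k => hA.eigenvectorBasis k with hxdef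
  set lam : n → ℝ := hA.eigenvalues with hlamdef
  set σ : n → ℝ := singularValues A with hsdef
  have hlam_nn : ∀ k, 0 ≤ lam k := fun k => (gramPSD A).eigenvalues_nonneg k
  have hσ_nn : ∀ k, 0 ≤ σ k := fun k => singularValues_nonneg A k
  have hσsq : ∀ k, σ k ^ 2 = lam k := fun k => sq_singularValues A k
  -- the image vectors
  set Ax : n → EuclideanSpace ℝ m :=
    fun k => (WithLp.equiv 2 (m → ℝ)).symm (A *ᵥ ⇑(x k)) with hAxdef
  have hdot : ∀ k l, ⟪Ax k, Ax l⟫ = if k = l then lam k else 0 := fun k l => gram_dot A k l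
  -- left singular vectors
  set w : n → EuclideanSpace ℝ m := fun k => (σ k)⁻¹ • Ax k with hwdef
  have hAx0 : ∀ k, σ k = 0 → Ax k = 0 := by
    intro k hk
    have : ⟪Ax k, Ax k⟫ = 0 := by
      rw [hdot k k, if_pos rfl, ← hσsq, hk]; norm_num
    exact inner_self_eq_zero.mp this
  have hAxw : ∀ k, Ax k = σ k • w k := by
    intro k
    by_cases hk : σ k = 0
    · rw [hAx0 k hk, hk, zero_smul]
    · rw [hwdef]; simp only []
      rw [smul_smul, mul_inv_cancel₀ hk, one_smul]
  have hw0 : ∀ k l, k ≠ l → ⟪w k, w l⟫ = 0 := by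
    intro k l hkl
    simp only [hwdef, real_inner_smul_left, real_inner_smul_right, hdot k l, if_neg hkl,
      mul_zero]
  have hw1 : ∀ k, ‖w k‖ ≤ 1 := by
    intro k
    by_cases hk : σ k = 0
    · simp [hwdef, hAx0 k hk]
    · have : ⟪w k, w k⟫ = 1 := by
        simp only [hwdef, real_inner_smul_left, real_inner_smul_right, hdot k k, if_pos rfl, ↓reduceIte]
        rw [← hσsq k]
        field_simp
      have hn : ‖w k‖ ^ 2 = 1 := by rw [← real_inner_self_eq_norm_sq, this]
      nlinarith [norm_nonneg (w k)]
  -- the expansion coefficients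
  set a : n → n → ℝ := fun i k => ⟪u i, w k⟫ with hadef
  set c : n → n → ℝ := fun i k => ⟪x k, b i⟫ with hcdef
  set d : n → n → ℝ := fun i k => (a i k ^ 2 + c i k ^ 2) / 2 with hddef
  have hd_nn : ∀ i k, 0 ≤ d i k := fun i k => by positivity
  -- the linear functional
  have hφ : ∀ i, ⟪u i, (WithLp.equiv 2 (m → ℝ)).symm (A *ᵥ ⇑(b i))⟫
      = ∑ k, c i k * (σ k * a i k) := by
    intro i
    set φ : EuclideanSpace ℝ n →ₗ[ℝ] ℝ := {
      toFun := fun y => ⟪u i, (WithLp.equiv 2 (m → ℝ)).symm (A *ᵥ ⇑y)⟫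
      map_add' := fun y z => by
        simp only [WithLp.ofLp_add, Matrix.mulVec_add, WithLp.equiv_symm_apply, WithLp.toLp_add,
          inner_add_right]
      map_smul' := fun r y => by
        simp only [WithLp.ofLp_smul, Matrix.mulVec_smul, WithLp.equiv_symm_apply, WithLp.toLp_smul,
          real_inner_smul_right, RingHom.id_apply, smul_eq_mul] } with hφdef
    have hrepr : (b i) = ∑ k, c i k • x k := by
      rw [eq_comm]
      calc ∑ k, c i k • x k
          = ∑ k, ((gramHerm A).eigenvectorBasis.repr (b i) k) • (gramHerm A).eigenvectorBasis k :=
            Finset.sum_congr rfl fun k _ => by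
              rw [(gramHerm A).eigenvectorBasis.repr_apply_apply]
        _ = b i := (gramHerm A).eigenvectorBasis.sum_repr (b i)
    calc ⟪u i, (WithLp.equiv 2 (m → ℝ)).symm (A *ᵥ ⇑(b i))⟫ = φ (b i) := rfl
    _ = ∑ k, c i k * φ (x k) := by
        rw [hrepr, map_sum]
        exact Finset.sum_congr rfl fun k _ => by rw [LinearMap.map_smul, smul_eq_mul]
    _ = ∑ k, c i k * (σ k * a i k) := by
        refine Finset.sum_congr rfl fun k _ => ?_
        congr 1
        show ⟪u i, Ax k⟫ = σ k * a i k
        rw [hAxw k, real_inner_smul_right]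
  -- row and column sums of the substochastic weights
  have hrow : ∀ i, ∑ k, d i k ≤ 1 := by
    intro i
    have ha : ∑ k, a i k ^ 2 ≤ 1 := by
      have hb := subBessel w hw0 hw1 (u i)
      have he : ∑ k, a i k ^ 2 = ∑ k, ⟪w k, u i⟫ ^ 2 :=
        Finset.sum_congr rfl fun k _ => by rw [hadef]; rw [real_inner_comm]
      rw [he]
      refine le_trans hb ?_
      have := hu1 i
      nlinarith [norm_nonneg (u i)]
    have hc : ∑ k, c i k ^ 2 = 1 := by
      have hpv := parseval (gramHerm A).eigenvectorBasis (b i)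
      have he : ∑ k, c i k ^ 2 = ∑ k, ⟪(gramHerm A).eigenvectorBasis k, b i⟫ ^ 2 := rfl
      rw [he, hpv, b.orthonormal.1 i, one_pow]
    have he : ∑ k, d i k = ((∑ k, a i k ^ 2) + ∑ k, c i k ^ 2) / 2 := by
      rw [← Finset.sum_add_distrib, ← Finset.sum_div]
    rw [he, hc]
    linarith
  have hcol : ∀ k, ∑ i, d i k ≤ 1 := by
    intro k
    have ha : ∑ i, a i k ^ 2 ≤ 1 := by
      have hb := subBessel u hu0 hu1 (w k)
      refine le_trans hb ?_
      have := hw1 k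
      nlinarith [norm_nonneg (w k)]
    have hc : ∑ i, c i k ^ 2 = 1 := by
      have hpv := parseval b (x k)
      have he : ∑ i, c i k ^ 2 = ∑ i, ⟪b i, x k⟫ ^ 2 :=
        Finset.sum_congr rfl fun i _ => by rw [hcdef]; rw [real_inner_comm]
      have hxk : ‖x k‖ = 1 := (gramHerm A).eigenvectorBasis.orthonormal.1 k
      rw [he, hpv, hxk, one_pow]
    have he : ∑ i, d i k = ((∑ i, a i k ^ 2) + ∑ i, c i k ^ 2) / 2 := by
      rw [← Finset.sum_add_distrib, ← Finset.sum_div]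
    rw [he, hc]
    linarith
  have habs : ∀ i, |⟪u i, (WithLp.equiv 2 (m → ℝ)).symm (A *ᵥ ⇑(b i))⟫|
      ≤ ∑ k, σ k * d i k := by
    intro i
    rw [hφ i]
    refine (Finset.abs_sum_le_sum_abs _ _).trans (Finset.sum_le_sum fun k _ => ?_)
    have amgm : |a i k| * |c i k| ≤ d i k := by
      rw [hddef]
      nlinarith [sq_nonneg (|a i k| - |c i k|), sq_abs (a i k), sq_abs (c i k)]
    calc |c i k * (σ k * a i k)| = σ k * (|a i k| * |c i k|) := by
          rw [abs_mul, abs_mul, abs_of_nonneg (hσ_nn k)]; ring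
      _ ≤ σ k * d i k := mul_le_mul_of_nonneg_left amgm (hσ_nn k)
  calc ∑ i, |⟪u i, (WithLp.equiv 2 (m → ℝ)).symm (A *ᵥ ⇑(b i))⟫| ^ p
      ≤ ∑ i, (∑ k, σ k * d i k) ^ p :=
        Finset.sum_le_sum fun i _ =>
          Real.rpow_le_rpow (abs_nonneg _) (habs i) (by linarith)
    _ ≤ ∑ i, ∑ k, d i k * σ k ^ p := by
        refine Finset.sum_le_sum fun i _ => ?_
        have hsub := subprob_rpow_le hp (fun k => d i k) σ (hd_nn i) (hrow i) hσ_nn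
        have e : (∑ k, σ k * d i k) = ∑ k, d i k * σ k :=
          Finset.sum_congr rfl fun k _ => mul_comm _ _
        rw [e]
        exact hsub
    _ = ∑ k, (∑ i, d i k) * σ k ^ p := by
        rw [Finset.sum_comm]
        exact Finset.sum_congr rfl fun k _ => (Finset.sum_mul _ _ _).symm
    _ ≤ ∑ k, σ k ^ p := by
        refine Finset.sum_le_sum fun k _ => ?_
        have h1 : (∑ i, d i k) * σ k ^ p ≤ 1 * σ k ^ p :=
          mul_le_mul_of_nonneg_right (hcol k) (Real.rpow_nonneg (hσ_nn k) p)
        simpa using h1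

end KLmain

section Triangle
variable {m n : Type*} [Fintype m] [Fintype n] [DecidableEq n]

lemma schattenNorm_nonneg (p : ℝ) (A : Matrix m n ℝ) : 0 ≤ schattenNorm p A :=
  Real.rpow_nonneg (Finset.sum_nonneg fun i _ =>
    Real.rpow_nonneg (singularValues_nonneg A i) p) _

lemma schattenNorm_triangle {p : ℝ} (hp : 1 ≤ p) (X Y : Matrix m n ℝ) :
    schattenNorm p (X + Y) ≤ schattenNorm p X + schattenNorm p Y := by
  classical
  set C := X + Y with hCdef
  set b := (gramHerm C).eigenvectorBasis with hbdef
  set lam := (gramHerm C).eigenvalues with hlamdef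
  set σ : n → ℝ := singularValues C with hσdef
  have hσ_nn : ∀ i, 0 ≤ σ i := fun i => singularValues_nonneg C i
  have hσsq : ∀ i, σ i ^ 2 = lam i := fun i => sq_singularValues C i
  set Ax : n → EuclideanSpace ℝ m :=
    fun i => (WithLp.equiv 2 (m → ℝ)).symm (C *ᵥ ⇑(b i)) with hAxdef
  have hdot : ∀ k l, ⟪Ax k, Ax l⟫ = if k = l then lam k else 0 := fun k l => gram_dot C k l
  set u : n → EuclideanSpace ℝ m := fun i => (σ i)⁻¹ • Ax i with hudef
  have hAx0 : ∀ k, σ k = 0 → Ax k = 0 := by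
    intro k hk
    have h : ⟪Ax k, Ax k⟫ = 0 := by
      rw [hdot k k, if_pos rfl, ← hσsq, hk]; norm_num
    exact inner_self_eq_zero.mp h
  have hu0 : ∀ k l, k ≠ l → ⟪u k, u l⟫ = 0 := by
    intro k l hkl
    simp only [hudef, real_inner_smul_left, real_inner_smul_right, hdot k l, if_neg hkl,
      mul_zero]
  have hu1 : ∀ k, ‖u k‖ ≤ 1 := by
    intro k
    by_cases hk : σ k = 0
    · simp [hudef, hAx0 k hk]
    · have h : ⟪u k, u k⟫ = 1 := by
        simp only [hudef, real_inner_smul_left, real_inner_smul_right, hdot k k, if_pos rfl, ↓reduceIte]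
        rw [← hσsq k]
        field_simp
      have hn : ‖u k‖ ^ 2 = 1 := by rw [← real_inner_self_eq_norm_sq, h]
      nlinarith [norm_nonneg (u k)]
  have hσval : ∀ i, ⟪u i, Ax i⟫ = σ i := by
    intro i
    by_cases hk : σ i = 0
    · rw [hAx0 i hk, inner_zero_right, hk]
    · simp only [hudef, real_inner_smul_left, hdot i i, if_pos rfl, ↓reduceIte]
      rw [← hσsq i]
      field_simp
  -- split `Ax` into the `X` and `Y` parts
  have hsplit : ∀ i, ⟪u i, Ax i⟫
      = ⟪u i, (WithLp.equiv 2 (m → ℝ)).symm (X *ᵥ ⇑(b i))⟫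
        + ⟪u i, (WithLp.equiv 2 (m → ℝ)).symm (Y *ᵥ ⇑(b i))⟫ := by
    intro i
    rw [← inner_add_right, WithLp.equiv_symm_apply, ← WithLp.toLp_add, ← Matrix.add_mulVec]
    rfl
  -- package into PiLp vectors
  have hp0 : (0:ℝ) < p := lt_of_lt_of_le zero_lt_one hp
  set q : ℝ≥0∞ := ENNReal.ofReal p with hqdef
  haveI : Fact (1 ≤ q) := ⟨by
    rw [hqdef, ← ENNReal.ofReal_one]
    exact ENNReal.ofReal_le_ofReal hp⟩
  have hqtop : q ≠ ⊤ := ENNReal.ofReal_ne_top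
  have hqt : q.toReal = p := ENNReal.toReal_ofReal hp0.le
  have hqt0 : 0 < q.toReal := by rw [hqt]; exact hp0
  set F : PiLp q (fun _ : n => ℝ) := (WithLp.equiv q _).symm
    (fun i => ⟪u i, (WithLp.equiv 2 (m → ℝ)).symm (X *ᵥ ⇑(b i))⟫) with hFdef
  set G : PiLp q (fun _ : n => ℝ) := (WithLp.equiv q _).symm
    (fun i => ⟪u i, (WithLp.equiv 2 (m → ℝ)).symm (Y *ᵥ ⇑(b i))⟫) with hGdef
  have hFi : ∀ i, F i = ⟪u i, (WithLp.equiv 2 (m → ℝ)).symm (X *ᵥ ⇑(b i))⟫ := fun i => rfl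
  have hGi : ∀ i, G i = ⟪u i, (WithLp.equiv 2 (m → ℝ)).symm (Y *ᵥ ⇑(b i))⟫ := fun i => rfl
  have hFGi : ∀ i, (F + G) i = F i + G i := fun i => rfl
  have hC_eq : schattenNorm p C = ‖F + G‖ := by
    rw [PiLp.norm_eq_sum hqt0, hqt, schattenNorm]
    congr 1
    refine Finset.sum_congr rfl fun i _ => ?_
    rw [hFGi, hFi, hGi, ← hsplit i, hσval i, Real.norm_eq_abs, abs_of_nonneg (hσ_nn i)]
  have hF_le : ‖F‖ ≤ schattenNorm p X := by
    rw [PiLp.norm_eq_sum hqt0, hqt, schattenNorm]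
    apply Real.rpow_le_rpow (Finset.sum_nonneg fun i _ => Real.rpow_nonneg (norm_nonneg _) p)
      ?_ (by positivity)
    refine le_trans (le_of_eq ?_) (key_lemma hp X b u hu0 hu1)
    exact Finset.sum_congr rfl fun i _ => by rw [hFi, Real.norm_eq_abs]
  have hG_le : ‖G‖ ≤ schattenNorm p Y := by
    rw [PiLp.norm_eq_sum hqt0, hqt, schattenNorm]
    apply Real.rpow_le_rpow (Finset.sum_nonneg fun i _ => Real.rpow_nonneg (norm_nonneg _) p)
      ?_ (by positivity)
    refine le_trans (le_of_eq ?_) (key_lemma hp Y b u hu0 hu1)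
    exact Finset.sum_congr rfl fun i _ => by rw [hGi, Real.norm_eq_abs]
  calc schattenNorm p C = ‖F + G‖ := hC_eq
    _ ≤ ‖F‖ + ‖G‖ := norm_add_le F G
    _ ≤ schattenNorm p X + schattenNorm p Y := add_le_add hF_le hG_le

end Triangle

section Reverse
variable {m n : Type*} [Fintype m] [Fintype n] [DecidableEq n]

lemma eigenvalues_congr {M N : Matrix n n ℝ} (h : M = N) (hM : M.IsHermitian)
    (hN : N.IsHermitian) : hM.eigenvalues = hN.eigenvalues := by subst h; rfl

lemma singularValues_neg (A : Matrix m n ℝ) : singularValues (-A) = singularValues A := by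
  funext i
  rw [singularValues_eq, singularValues_eq]
  have h : (-A)ᵀ * (-A) = Aᵀ * A := by
    rw [Matrix.transpose_neg, Matrix.neg_mul, Matrix.mul_neg, neg_neg]
  rw [congrFun (eigenvalues_congr h (gramHerm (-A)) (gramHerm A)) i]

lemma schattenNorm_neg (p : ℝ) (A : Matrix m n ℝ) :
    schattenNorm p (-A) = schattenNorm p A := by
  unfold schattenNorm
  rw [singularValues_neg]

lemma abs_schattenNorm_sub_le {p : ℝ} (hp : 1 ≤ p) (X Y : Matrix m n ℝ) :
    |schattenNorm p X - schattenNorm p Y| ≤ schattenNorm p (X - Y) := by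
  have h1 : schattenNorm p X ≤ schattenNorm p (X - Y) + schattenNorm p Y := by
    have h := schattenNorm_triangle hp (X - Y) Y
    rwa [sub_add_cancel] at h
  have h2 : schattenNorm p Y ≤ schattenNorm p (X - Y) + schattenNorm p X := by
    have h := schattenNorm_triangle hp (Y - X) X
    rw [sub_add_cancel] at h
    have hneg : schattenNorm p (Y - X) = schattenNorm p (X - Y) := by
      rw [← schattenNorm_neg p (X - Y), neg_sub]
    linarith
  rw [abs_sub_le_iff]
  constructor <;> linarith

lemma exp_renyi_mul_traceNorm {p : ℝ} (hp : 1 < p) {A : Matrix m n ℝ} (hA : A ≠ 0) :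
    Real.exp ((1 - p) / p * renyiEE p A) * traceNorm A = schattenNorm p A := by
  obtain ⟨i0, hi0⟩ := exists_singularValue_pos hA
  have hp0 : (0:ℝ) < p := by linarith
  have hT : (0:ℝ) < ∑ i, singularValues A i :=
    Finset.sum_pos' (fun i _ => singularValues_nonneg A i) ⟨i0, Finset.mem_univ i0, hi0⟩
  have hS : (0:ℝ) < ∑ i, singularValues A i ^ p :=
    Finset.sum_pos' (fun i _ => Real.rpow_nonneg (singularValues_nonneg A i) p)
      ⟨i0, Finset.mem_univ i0, Real.rpow_pos_of_pos hi0 p⟩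
  have hTp : (0:ℝ) < (∑ i, singularValues A i) ^ p := Real.rpow_pos_of_pos hT p
  have hx : (0:ℝ) < (∑ i, singularValues A i ^ p) / (∑ i, singularValues A i) ^ p :=
    div_pos hS hTp
  have h1p : (1:ℝ) - p ≠ 0 := by intro h; linarith
  have key : (1 - p) / p * renyiEE p A
      = Real.log ((∑ i, singularValues A i ^ p) / (∑ i, singularValues A i) ^ p) * (1 / p) := by
    rw [renyiEE]
    field_simp
  rw [key, ← Real.rpow_def_of_pos hx (1 / p)]
  have hTn : traceNorm A = ∑ i, singularValues A i := rfl
  rw [hTn, Real.div_rpow hS.le hTp.le]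
  have hTT : ((∑ i, singularValues A i) ^ p) ^ (1 / p) = ∑ i, singularValues A i := by
    rw [← Real.rpow_mul hT.le, mul_one_div_cancel hp0.ne', Real.rpow_one]
  rw [hTT, div_mul_cancel₀ _ hT.ne']
  rfl

end Reverse

lemma pointwise_bound {m n : Type*} [Fintype m] [Fintype n] [DecidableEq n]
    {p : ℝ} (hp : 1 < p) {X Y : Matrix m n ℝ} (hX : X ≠ 0) (hY : Y ≠ 0) :
    |Real.exp ((1 - p) / p * renyiEE p X) * traceNorm X
      - Real.exp ((1 - p) / p * renyiEE p Y) * traceNorm Y|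
      ≤ schattenNorm p (X - Y) := by
  rw [exp_renyi_mul_traceNorm hp hX, exp_renyi_mul_traceNorm hp hY]
  exact abs_schattenNorm_sub_le hp.le X Y


end AuxSchatten

/-- The matricization `W(l)` of a tensor `W : {1,…,P}^L → ℝ` at cut `l`: the matrix
with rows indexed by multi-indices of length `l` and columns by those of length
`L - l`, whose `(a, b)` entry is `W` evaluated at the concatenation of `a` and `b`. -/
def matricize {L P : ℕ} (W : (Fin L → Fin P) → ℝ) (l : ℕ) (hl : l ≤ L) :
    Matrix (Fin l → Fin P) (Fin (L - l) → Fin P) ℝ :=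
  fun a b => W fun i => Sum.elim a b (finSumFinEquiv.symm (Fin.cast (by omega) i))

/-- The matricization at the cut `l + 1` for `l : Fin (L - 1)`, i.e. at an
arbitrary cut `1 ≤ l + 1 ≤ L - 1`. -/
def cutMat {L P : ℕ} (hL : 2 ≤ L) (W : (Fin L → Fin P) → ℝ) (l : Fin (L - 1)) :
    Matrix (Fin ((l : ℕ) + 1) → Fin P) (Fin (L - ((l : ℕ) + 1)) → Fin P) ℝ :=
  matricize W ((l : ℕ) + 1) (by have := l.isLt; omega)

theorem worst_case_bound_by_EE
    (p : ℝ) (hp : 1 < p) (L P : ℕ) (hL : 2 ≤ L) (hP : 2 ≤ P)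
    (W : (Fin L → Fin P) → ℝ)
    (hW : ∀ l : Fin (L - 1), cutMat hL W l ≠ 0)
    (𝒯 : Set ((Fin L → Fin P) → ℝ)) (h𝒯 : 𝒯.Nonempty)
    (h𝒯' : ∀ Wb ∈ 𝒯, ∀ l : Fin (L - 1), cutMat hL Wb l ≠ 0) :
    sInf ((fun Wb => ⨆ l : Fin (L - 1),
        schattenNorm p (cutMat hL W l - cutMat hL Wb l)) '' 𝒯)
      ≥ sInf ((fun Wb => ⨆ l : Fin (L - 1),
          |Real.exp ((1 - p) / p * renyiEE p (cutMat hL W l)) * traceNorm (cutMat hL W l)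
            - Real.exp ((1 - p) / p * renyiEE p (cutMat hL Wb l))
              * traceNorm (cutMat hL Wb l)|) '' 𝒯) := by
    classical
  haveI : Nonempty (Fin (L - 1)) := ⟨⟨0, by omega⟩⟩
  set f := fun Wb => ⨆ l : Fin (L - 1),
      schattenNorm p (cutMat hL W l - cutMat hL Wb l) with hfdef
  set g := fun Wb => ⨆ l : Fin (L - 1),
      |Real.exp ((1 - p) / p * renyiEE p (cutMat hL W l)) * traceNorm (cutMat hL W l)
        - Real.exp ((1 - p) / p * renyiEE p (cutMat hL Wb l))
          * traceNorm (cutMat hL Wb l)| with hgdef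
  refine le_csInf (h𝒯.image f) ?_
  rintro a ⟨Wb, hWb, rfl⟩
  have hgf : g Wb ≤ f Wb := by
    refine ciSup_le fun l => ?_
    have hb : BddAbove (Set.range fun l : Fin (L - 1) =>
        schattenNorm p (cutMat hL W l - cutMat hL Wb l)) :=
      Set.Finite.bddAbove (Set.finite_range _)
    exact le_trans (pointwise_bound hp (hW l) (h𝒯' Wb hWb l)) (le_ciSup hb l)
  refine le_trans (csInf_le ?_ (Set.mem_image_of_mem g hWb)) hgf
  refine ⟨0, ?_⟩
  rintro y ⟨Wc, hWc, rfl⟩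
  have hb : BddAbove (Set.range fun l : Fin (L - 1) =>
      |Real.exp ((1 - p) / p * renyiEE p (cutMat hL W l)) * traceNorm (cutMat hL W l)
        - Real.exp ((1 - p) / p * renyiEE p (cutMat hL Wc l))
          * traceNorm (cutMat hL Wc l)|) :=
    Set.Finite.bddAbove (Set.finite_range _)
  exact le_trans (abs_nonneg _) (le_ciSup hb (Classical.arbitrary _))
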